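/- arXiv:2012.13389 — 2 statements merged into one kernel-verified Lean document; each statement's English description precedes it below -/
import Mathlib

section
/- The convex hull of the 8 even-weight vertices of {0,1}⁴ (those with an even number of 1's) equals the set of β ∈ [0,1]⁴ satisfying −2 ≤ β_i − Σ_{j≠i} β_j ≤ 0 for each i = 1,2,3,4. -/
open Finset

section DemicubeAux

private lemma dmc_c5 {α : Type*} (a b c d e f g h : α) :
    (![a,b,c,d,e,f,g,h] : Fin 8 → α) 5 = f := rfl
private lemma dmc_c6 {α : Type*} (a b c d e f g h : α) :
    (![a,b,c,d,e,f,g,h] : Fin 8 → α) 6 = g := rfl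
private lemma dmc_c7 {α : Type*} (a b c d e f g h : α) :
    (![a,b,c,d,e,f,g,h] : Fin 8 → α) 7 = h := rfl


private lemma dmc_vec8_nonneg {a b c d e f g h : ℝ} (ha : 0 ≤ a) (hb : 0 ≤ b) (hc : 0 ≤ c)
    (hd : 0 ≤ d) (he : 0 ≤ e) (hf : 0 ≤ f) (hg : 0 ≤ g) (hh : 0 ≤ h) :
    ∀ j : Fin 8, 0 ≤ (![a,b,c,d,e,f,g,h] : Fin 8 → ℝ) j := fun j =>
  match j with
  | 0 => ha
  | 1 => hb
  | 2 => hc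
  | 3 => hd
  | 4 => he
  | 5 => hf
  | 6 => hg
  | 7 => hh

noncomputable def dmcZ : Fin 8 → Fin 4 → ℝ :=
  ![![0,0,0,0], ![1,1,0,0], ![1,0,1,0], ![1,0,0,1],
    ![0,1,1,0], ![0,1,0,1], ![0,0,1,1], ![1,1,1,1]]

noncomputable def dmcW (b0 b1 b2 b3 : ℝ) : Fin 8 → ℝ :=
  let s := b0 + b1 + b2 + b3
  let t := max 0 (s / 2 - 1)
  let p := b0 + b1 - s / 2
  let q := b0 + b2 - s / 2
  let r := b0 + b3 - s / 2
  let R := b0 - t - (max 0 p + max 0 q + max 0 r)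
  ![1 + t - s / 2, max 0 p + R, max 0 q, max 0 r,
    max 0 r - r, max 0 q - q, max 0 p - p + R, t]

private lemma dmcR_nonneg (b0 b1 b2 b3 : ℝ)
    (hb0 : 0 ≤ b0) (hb0' : b0 ≤ 1) (hb1 : 0 ≤ b1) (hb1' : b1 ≤ 1)
    (hb2 : 0 ≤ b2) (hb2' : b2 ≤ 1) (hb3 : 0 ≤ b3) (hb3' : b3 ≤ 1)
    (hc0 : -2 ≤ 2 * b0 - (b0 + b1 + b2 + b3)) (hc0' : 2 * b0 - (b0 + b1 + b2 + b3) ≤ 0)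
    (hc1 : -2 ≤ 2 * b1 - (b0 + b1 + b2 + b3)) (hc1' : 2 * b1 - (b0 + b1 + b2 + b3) ≤ 0)
    (hc2 : -2 ≤ 2 * b2 - (b0 + b1 + b2 + b3)) (hc2' : 2 * b2 - (b0 + b1 + b2 + b3) ≤ 0)
    (hc3 : -2 ≤ 2 * b3 - (b0 + b1 + b2 + b3)) (hc3' : 2 * b3 - (b0 + b1 + b2 + b3) ≤ 0) :
    0 ≤ b0 - max 0 ((b0 + b1 + b2 + b3) / 2 - 1) -
      (max 0 (b0 + b1 - (b0 + b1 + b2 + b3) / 2) +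
       max 0 (b0 + b2 - (b0 + b1 + b2 + b3) / 2) +
       max 0 (b0 + b3 - (b0 + b1 + b2 + b3) / 2)) := by
  rcases max_cases 0 ((b0 + b1 + b2 + b3) / 2 - 1) with ⟨e1, h1⟩ | ⟨e1, h1⟩ <;>
  rcases max_cases 0 (b0 + b1 - (b0 + b1 + b2 + b3) / 2) with ⟨e2, h2⟩ | ⟨e2, h2⟩ <;>
  rcases max_cases 0 (b0 + b2 - (b0 + b1 + b2 + b3) / 2) with ⟨e3, h3⟩ | ⟨e3, h3⟩ <;>
  rcases max_cases 0 (b0 + b3 - (b0 + b1 + b2 + b3) / 2) with ⟨e4, h4⟩ | ⟨e4, h4⟩ <;>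
  rw [e1, e2, e3, e4] <;> linarith

private lemma dmcW_sum (b0 b1 b2 b3 : ℝ) : ∑ j : Fin 8, dmcW b0 b1 b2 b3 j = 1 := by
  simp only [dmcW, Fin.sum_univ_eight, dmc_c5, dmc_c6, dmc_c7, Matrix.cons_val_zero,
    Matrix.cons_val_one, Matrix.head_cons, Matrix.cons_val_two, Matrix.tail_cons,
    Matrix.cons_val_three, Matrix.cons_val_four]
  ring

private lemma dmcW_comb (b0 b1 b2 b3 : ℝ) (k : Fin 4) :
    ∑ j : Fin 8, dmcW b0 b1 b2 b3 j * dmcZ j k = ![b0, b1, b2, b3] k := by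
  fin_cases k <;>
    simp only [dmcZ, dmcW, Fin.sum_univ_eight, dmc_c5, dmc_c6, dmc_c7, Matrix.cons_val_zero,
      Matrix.cons_val_one, Matrix.head_cons, Matrix.cons_val_two, Matrix.tail_cons,
      Matrix.cons_val_three, Matrix.cons_val_four, Fin.isValue] <;>
    norm_num <;> ring

private lemma dmc_mem0 :
    (∀ i, (![0,0,0,0] : Fin 4 → ℝ) i = 0 ∨ (![0,0,0,0] : Fin 4 → ℝ) i = 1) ∧
      Even (Finset.univ.filter (fun i => (![0,0,0,0] : Fin 4 → ℝ) i = 1)).card := by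
  constructor
  · intro i; fin_cases i <;> norm_num
  · have he : Finset.univ.filter (fun i => (![0,0,0,0] : Fin 4 → ℝ) i = 1) = (∅ : Finset (Fin 4)) := by
      ext i; fin_cases i <;> simp
    rw [he]; decide

private lemma dmc_mem1 :
    (∀ i, (![1,1,0,0] : Fin 4 → ℝ) i = 0 ∨ (![1,1,0,0] : Fin 4 → ℝ) i = 1) ∧
      Even (Finset.univ.filter (fun i => (![1,1,0,0] : Fin 4 → ℝ) i = 1)).card := by
  constructor
  · intro i; fin_cases i <;> norm_num
  · have he : Finset.univ.filter (fun i => (![1,1,0,0] : Fin 4 → ℝ) i = 1) = ({0, 1} : Finset (Fin 4)) := by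
      ext i; fin_cases i <;> simp
    rw [he]; decide

private lemma dmc_mem2 :
    (∀ i, (![1,0,1,0] : Fin 4 → ℝ) i = 0 ∨ (![1,0,1,0] : Fin 4 → ℝ) i = 1) ∧
      Even (Finset.univ.filter (fun i => (![1,0,1,0] : Fin 4 → ℝ) i = 1)).card := by
  constructor
  · intro i; fin_cases i <;> norm_num
  · have he : Finset.univ.filter (fun i => (![1,0,1,0] : Fin 4 → ℝ) i = 1) = ({0, 2} : Finset (Fin 4)) := by
      ext i; fin_cases i <;> simp
    rw [he]; decide

private lemma dmc_mem3 :
    (∀ i, (![1,0,0,1] : Fin 4 → ℝ) i = 0 ∨ (![1,0,0,1] : Fin 4 → ℝ) i = 1) ∧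
      Even (Finset.univ.filter (fun i => (![1,0,0,1] : Fin 4 → ℝ) i = 1)).card := by
  constructor
  · intro i; fin_cases i <;> norm_num
  · have he : Finset.univ.filter (fun i => (![1,0,0,1] : Fin 4 → ℝ) i = 1) = ({0, 3} : Finset (Fin 4)) := by
      ext i; fin_cases i <;> simp
    rw [he]; decide

private lemma dmc_mem4 :
    (∀ i, (![0,1,1,0] : Fin 4 → ℝ) i = 0 ∨ (![0,1,1,0] : Fin 4 → ℝ) i = 1) ∧
      Even (Finset.univ.filter (fun i => (![0,1,1,0] : Fin 4 → ℝ) i = 1)).card := by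
  constructor
  · intro i; fin_cases i <;> norm_num
  · have he : Finset.univ.filter (fun i => (![0,1,1,0] : Fin 4 → ℝ) i = 1) = ({1, 2} : Finset (Fin 4)) := by
      ext i; fin_cases i <;> simp
    rw [he]; decide

private lemma dmc_mem5 :
    (∀ i, (![0,1,0,1] : Fin 4 → ℝ) i = 0 ∨ (![0,1,0,1] : Fin 4 → ℝ) i = 1) ∧
      Even (Finset.univ.filter (fun i => (![0,1,0,1] : Fin 4 → ℝ) i = 1)).card := by
  constructor
  · intro i; fin_cases i <;> norm_num
  · have he : Finset.univ.filter (fun i => (![0,1,0,1] : Fin 4 → ℝ) i = 1) = ({1, 3} : Finset (Fin 4)) := by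
      ext i; fin_cases i <;> simp
    rw [he]; decide

private lemma dmc_mem6 :
    (∀ i, (![0,0,1,1] : Fin 4 → ℝ) i = 0 ∨ (![0,0,1,1] : Fin 4 → ℝ) i = 1) ∧
      Even (Finset.univ.filter (fun i => (![0,0,1,1] : Fin 4 → ℝ) i = 1)).card := by
  constructor
  · intro i; fin_cases i <;> norm_num
  · have he : Finset.univ.filter (fun i => (![0,0,1,1] : Fin 4 → ℝ) i = 1) = ({2, 3} : Finset (Fin 4)) := by
      ext i; fin_cases i <;> simp
    rw [he]; decide

private lemma dmc_mem7 :
    (∀ i, (![1,1,1,1] : Fin 4 → ℝ) i = 0 ∨ (![1,1,1,1] : Fin 4 → ℝ) i = 1) ∧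
      Even (Finset.univ.filter (fun i => (![1,1,1,1] : Fin 4 → ℝ) i = 1)).card := by
  constructor
  · intro i; fin_cases i <;> norm_num
  · have he : Finset.univ.filter (fun i => (![1,1,1,1] : Fin 4 → ℝ) i = 1) = (Finset.univ : Finset (Fin 4)) := by
      ext i; fin_cases i <;> simp
    rw [he]; decide

end DemicubeAux

theorem stmt_12 :
    convexHull ℝ
        {v : Fin 4 → ℝ | (∀ i, v i = 0 ∨ v i = 1) ∧
          Even (Finset.univ.filter (fun i => v i = 1)).card} =
      {β : Fin 4 → ℝ | (∀ i, β i ∈ Set.Icc (0 : ℝ) 1) ∧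
        ∀ i : Fin 4,
          -2 ≤ β i - ∑ j ∈ Finset.univ.erase i, β j ∧
          β i - ∑ j ∈ Finset.univ.erase i, β j ≤ 0} := by
  apply le_antisymm
  · -- convex hull ⊆ H-description
    apply convexHull_min
    · rintro v ⟨h01, hpar⟩
      set n := (Finset.univ.filter (fun i => v i = 1)).card with hn
      have hsum : ∑ i, v i = (n : ℝ) := by
        have h1 : ∀ i ∈ Finset.univ, v i = if v i = 1 then (1:ℝ) else 0 := by
          intro i _; rcases h01 i with h | h <;> simp [h]
        rw [Finset.sum_congr rfl h1, Finset.sum_boole]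
      have hn4 : n ≤ 4 := by
        calc n ≤ (Finset.univ : Finset (Fin 4)).card := Finset.card_filter_le _ _
          _ = 4 := by simp
      constructor
      · intro i; rcases h01 i with h | h <;> simp [h]
      · intro i
        have herase : ∑ j ∈ Finset.univ.erase i, v j = (n : ℝ) - v i := by
          have := Finset.sum_erase_add Finset.univ v (Finset.mem_univ i)
          linarith [hsum]
        rw [herase]
        rcases h01 i with h | h
        · -- v i = 0, need n ≤ 2
          have hni : i ∉ Finset.univ.filter (fun i => v i = 1) := by simp [h]
          have hsub : Finset.univ.filter (fun i => v i = 1) ⊆ Finset.univ.erase i := by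
            intro j hj
            rcases Finset.mem_filter.1 hj with ⟨_, hj1⟩
            refine Finset.mem_erase.2 ⟨?_, Finset.mem_univ j⟩
            rintro rfl; exact hni hj
          have h3 : n ≤ 3 := by
            calc n ≤ (Finset.univ.erase i).card := Finset.card_le_card hsub
              _ = 3 := by simp
          have h2 : n ≤ 2 := by obtain ⟨k, hk⟩ := hpar; omega
          have hle : (n : ℝ) ≤ 2 := by exact_mod_cast h2
          have hge : (0:ℝ) ≤ (n:ℝ) := Nat.cast_nonneg n
          rw [h]; constructor <;> linarith
        · -- v i = 1, need n ≥ 2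
          have hni : i ∈ Finset.univ.filter (fun i => v i = 1) := by simp [h]
          have h1 : 1 ≤ n := Finset.card_pos.2 ⟨i, hni⟩
          have h2 : 2 ≤ n := by obtain ⟨k, hk⟩ := hpar; omega
          have h2' : (2 : ℝ) ≤ n := by exact_mod_cast h2
          have h4' : (n : ℝ) ≤ 4 := by exact_mod_cast hn4
          constructor <;> linarith
    · rintro x hx y hy a b ha hb hab
      constructor
      · intro i
        have hxi := hx.1 i; have hyi := hy.1 i
        simp only [Set.mem_Icc] at *
        constructor
        · have := mul_nonneg ha hxi.1; have := mul_nonneg hb hyi.1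
          simp only [Pi.add_apply, Pi.smul_apply, smul_eq_mul]; linarith
        · have h1 : a * x i ≤ a * 1 := mul_le_mul_of_nonneg_left hxi.2 ha
          have h2 : b * y i ≤ b * 1 := mul_le_mul_of_nonneg_left hyi.2 hb
          simp only [Pi.add_apply, Pi.smul_apply, smul_eq_mul]; linarith
      · intro i
        have hxi := hx.2 i; have hyi := hy.2 i
        have hes : ∑ j ∈ Finset.univ.erase i, (a * x j + b * y j)
            = a * (∑ j ∈ Finset.univ.erase i, x j) + b * (∑ j ∈ Finset.univ.erase i, y j) := by
          rw [Finset.sum_add_distrib, Finset.mul_sum, Finset.mul_sum]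
        have hx1 := mul_le_mul_of_nonneg_left hxi.1 ha
        have hx2 := mul_nonpos_of_nonneg_of_nonpos ha hxi.2
        have hy1 := mul_le_mul_of_nonneg_left hyi.1 hb
        have hy2 := mul_nonpos_of_nonneg_of_nonpos hb hyi.2
        simp only [Pi.add_apply, Pi.smul_apply, smul_eq_mul]
        rw [hes]
        constructor <;> nlinarith [hx1, hx2, hy1, hy2]
  · -- H-description ⊆ convex hull
    rintro β ⟨hIcc, hineq⟩
    set V : Set (Fin 4 → ℝ) := {v : Fin 4 → ℝ | (∀ i, v i = 0 ∨ v i = 1) ∧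
            Even (Finset.univ.filter (fun i => v i = 1)).card} with hV
    have hb0 := (hIcc 0).1; have hb0' := (hIcc 0).2
    have hb1 := (hIcc 1).1; have hb1' := (hIcc 1).2
    have hb2 := (hIcc 2).1; have hb2' := (hIcc 2).2
    have hb3 := (hIcc 3).1; have hb3' := (hIcc 3).2
    have herase : ∀ i : Fin 4, ∑ j ∈ Finset.univ.erase i, β j = (∑ j, β j) - β i := by
      intro i
      have := Finset.sum_erase_add Finset.univ β (Finset.mem_univ i)
      linarith
    have hsum4 : ∑ j, β j = β 0 + β 1 + β 2 + β 3 := by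
      rw [Fin.sum_univ_four]
    have hc : ∀ i : Fin 4, -2 ≤ 2 * β i - (β 0 + β 1 + β 2 + β 3) ∧
        2 * β i - (β 0 + β 1 + β 2 + β 3) ≤ 0 := by
      intro i
      have h := hineq i
      rw [herase i, hsum4] at h
      constructor <;> linarith [h.1, h.2]
    obtain ⟨hc0, hc0'⟩ := hc 0
    obtain ⟨hc1, hc1'⟩ := hc 1
    obtain ⟨hc2, hc2'⟩ := hc 2
    obtain ⟨hc3, hc3'⟩ := hc 3
    -- nonnegativity of weights
    have hR := dmcR_nonneg (β 0) (β 1) (β 2) (β 3) hb0 hb0' hb1 hb1' hb2 hb2' hb3 hb3'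
      hc0 hc0' hc1 hc1' hc2 hc2' hc3 hc3'
    have hw0 : 0 ≤ 1 + max 0 ((β 0 + β 1 + β 2 + β 3) / 2 - 1) - (β 0 + β 1 + β 2 + β 3) / 2 := by
      linarith [le_max_right (0:ℝ) ((β 0 + β 1 + β 2 + β 3) / 2 - 1)]
    have hw1 : 0 ≤ max 0 (β 0 + β 1 - (β 0 + β 1 + β 2 + β 3) / 2) + (β 0 - max 0 ((β 0 + β 1 + β 2 + β 3) / 2 - 1) - (max 0 (β 0 + β 1 - (β 0 + β 1 + β 2 + β 3) / 2) + max 0 (β 0 + β 2 - (β 0 + β 1 + β 2 + β 3) / 2) + max 0 (β 0 + β 3 - (β 0 + β 1 + β 2 + β 3) / 2))) := by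
      linarith [le_max_left (0:ℝ) (β 0 + β 1 - (β 0 + β 1 + β 2 + β 3) / 2)]
    have hw2 : 0 ≤ max 0 (β 0 + β 2 - (β 0 + β 1 + β 2 + β 3) / 2) := le_max_left _ _
    have hw3 : 0 ≤ max 0 (β 0 + β 3 - (β 0 + β 1 + β 2 + β 3) / 2) := le_max_left _ _
    have hw4 : 0 ≤ max 0 (β 0 + β 3 - (β 0 + β 1 + β 2 + β 3) / 2) - (β 0 + β 3 - (β 0 + β 1 + β 2 + β 3) / 2) := by
      linarith [le_max_right (0:ℝ) (β 0 + β 3 - (β 0 + β 1 + β 2 + β 3) / 2)]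
    have hw5 : 0 ≤ max 0 (β 0 + β 2 - (β 0 + β 1 + β 2 + β 3) / 2) - (β 0 + β 2 - (β 0 + β 1 + β 2 + β 3) / 2) := by
      linarith [le_max_right (0:ℝ) (β 0 + β 2 - (β 0 + β 1 + β 2 + β 3) / 2)]
    have hw6 : 0 ≤ max 0 (β 0 + β 1 - (β 0 + β 1 + β 2 + β 3) / 2) - (β 0 + β 1 - (β 0 + β 1 + β 2 + β 3) / 2) + (β 0 - max 0 ((β 0 + β 1 + β 2 + β 3) / 2 - 1) - (max 0 (β 0 + β 1 - (β 0 + β 1 + β 2 + β 3) / 2) + max 0 (β 0 + β 2 - (β 0 + β 1 + β 2 + β 3) / 2) + max 0 (β 0 + β 3 - (β 0 + β 1 + β 2 + β 3) / 2))) := by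
      linarith [le_max_right (0:ℝ) (β 0 + β 1 - (β 0 + β 1 + β 2 + β 3) / 2)]
    have hw7 : 0 ≤ max 0 ((β 0 + β 1 + β 2 + β 3) / 2 - 1) := le_max_left _ _
    have hwnn : ∀ j ∈ Finset.univ, 0 ≤ dmcW (β 0) (β 1) (β 2) (β 3) j := fun j _ =>
      dmc_vec8_nonneg hw0 hw1 hw2 hw3 hw4 hw5 hw6 hw7 j
    have hwsum : ∑ j, dmcW (β 0) (β 1) (β 2) (β 3) j = 1 := dmcW_sum _ _ _ _
    have hzV : ∀ j ∈ Finset.univ, dmcZ j ∈ convexHull ℝ V := by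
      intro j _
      apply subset_convexHull
      fin_cases j
      · exact dmc_mem0
      · exact dmc_mem1
      · exact dmc_mem2
      · exact dmc_mem3
      · exact dmc_mem4
      · exact dmc_mem5
      · exact dmc_mem6
      · exact dmc_mem7
    have hcomb := (convex_convexHull ℝ V).sum_mem hwnn hwsum hzV
    have heq : ∑ j, dmcW (β 0) (β 1) (β 2) (β 3) j • dmcZ j = β := by
      funext k
      rw [Finset.sum_apply]
      simp only [Pi.smul_apply, smul_eq_mul]
      have := dmcW_comb (β 0) (β 1) (β 2) (β 3) k
      rw [this]
      fin_cases k <;> rfl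
    rw [heq] at hcomb
    exact hcomb
end

section
/- The convex hull of the 8 odd-weight vertices of {0,1}⁴ (those with an odd number of 1's) equals the set of β ∈ [0,1]⁴ satisfying 1 ≤ β₁+β₂+β₃+β₄ ≤ 3 and −1 ≤ β_i + β_j − β_k − β_l ≤ 1 for every partition {i,j} ⊔ {k,l} = {1,2,3,4}. -/
open Finset

private lemma two_sets : ∀ I : Finset (Fin 4), I.card = 2 →
    I = {0,1} ∨ I = {0,2} ∨ I = {0,3} ∨ I = {1,2} ∨ I = {1,3} ∨ I = {2,3} := by decide

private lemma c01 : ({0,1} : Finset (Fin 4))ᶜ = {2,3} := by decide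
private lemma c02 : ({0,2} : Finset (Fin 4))ᶜ = {1,3} := by decide
private lemma c03 : ({0,3} : Finset (Fin 4))ᶜ = {1,2} := by decide
private lemma c12 : ({1,2} : Finset (Fin 4))ᶜ = {0,3} := by decide
private lemma c13 : ({1,3} : Finset (Fin 4))ᶜ = {0,2} := by decide
private lemma c23 : ({2,3} : Finset (Fin 4))ᶜ = {0,1} := by decide

private lemma spair (β : Fin 4 → ℝ) (a b : Fin 4) (h : a ≠ b) :
    ∑ i ∈ ({a,b} : Finset (Fin 4)), β i = β a + β b := Finset.sum_pair h

set_option maxHeartbeats 1000000 in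
theorem stmt_13 :
    convexHull ℝ
        {v : Fin 4 → ℝ | (∀ i, v i = 0 ∨ v i = 1) ∧
          Odd (Finset.univ.filter (fun i => v i = 1)).card} =
      {β : Fin 4 → ℝ | (∀ i, β i ∈ Set.Icc (0 : ℝ) 1) ∧
        (1 ≤ β 0 + β 1 + β 2 + β 3 ∧ β 0 + β 1 + β 2 + β 3 ≤ 3) ∧
        ∀ I : Finset (Fin 4), I.card = 2 →
          -1 ≤ (∑ i ∈ I, β i) - (∑ j ∈ Iᶜ, β j) ∧
            (∑ i ∈ I, β i) - (∑ j ∈ Iᶜ, β j) ≤ 1} := by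
  apply Set.Subset.antisymm
  ·
    apply convexHull_min
    · rintro v ⟨hv, hodd⟩
      have h0 := hv 0; have h1 := hv 1; have h2 := hv 2; have h3 := hv 3
      rw [Finset.card_filter, Fin.sum_univ_four] at hodd
      rcases h0 with h0|h0 <;> rcases h1 with h1|h1 <;> rcases h2 with h2|h2 <;>
          rcases h3 with h3|h3 <;>
        simp only [h0, h1, h2, h3, Nat.odd_iff] at hodd <;>
        norm_num at hodd <;>
        · refine ⟨fun i => ?_, by norm_num [h0, h1, h2, h3], fun I hI => ?_⟩
          · rcases hv i with h|h <;> norm_num [h]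
          · rcases two_sets I hI with rfl|rfl|rfl|rfl|rfl|rfl <;>
              simp only [c01, c02, c03, c12, c13, c23,
                spair v 0 1 (by decide), spair v 0 2 (by decide), spair v 0 3 (by decide),
                spair v 1 2 (by decide), spair v 1 3 (by decide), spair v 2 3 (by decide)] <;>
              norm_num [h0, h1, h2, h3]
    · rintro x hx y hy a b ha hb hab
      simp only [Set.mem_setOf_eq] at hx hy ⊢
      refine ⟨fun i => ?_, ?_, fun I hI => ?_⟩
      · have h1 := hx.1 i; have h2 := hy.1 i
        simp only [Set.mem_Icc, Pi.add_apply, Pi.smul_apply, smul_eq_mul] at *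
        constructor <;> nlinarith [h1.1, h1.2, h2.1, h2.2]
      · have h1 := hx.2.1; have h2 := hy.2.1
        simp only [Pi.add_apply, Pi.smul_apply, smul_eq_mul]
        constructor <;> nlinarith [h1.1, h1.2, h2.1, h2.2]
      · have h1 := hx.2.2 I hI; have h2 := hy.2.2 I hI
        simp only [Pi.add_apply, Pi.smul_apply, smul_eq_mul, Finset.sum_add_distrib,
          ← Finset.mul_sum]
        constructor <;> nlinarith [h1.1, h1.2, h2.1, h2.2]
  ·
    rintro β ⟨hcoord, ⟨hs1, hs3⟩, hpair⟩
    have hb0 := hcoord 0; have hb1 := hcoord 1; have hb2 := hcoord 2; have hb3 := hcoord 3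
    rw [Set.mem_Icc] at hb0 hb1 hb2 hb3
    have p01 := hpair {0,1} (by decide)
    have p02 := hpair {0,2} (by decide)
    have p03 := hpair {0,3} (by decide)
    rw [c01, spair β 0 1 (by decide), spair β 2 3 (by decide)] at p01
    rw [c02, spair β 0 2 (by decide), spair β 1 3 (by decide)] at p02
    rw [c03, spair β 0 3 (by decide), spair β 1 2 (by decide)] at p03
    set M : ℝ := (β 0 + β 1 + β 2 + β 3 - 1) / 2 with hM
    set m0 : ℝ := max 0 (M - β 0) with hm0
    set m1 : ℝ := max 0 (M - β 1) with hm1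
    set m2 : ℝ := max 0 (M - β 2) with hm2
    set m3 : ℝ := max 0 (M - β 3) with hm3
    set p0 : ℝ := max 0 (β 0 - M) with hp0
    set p1 : ℝ := max 0 (β 1 - M) with hp1
    set p2 : ℝ := max 0 (β 2 - M) with hp2
    set p3 : ℝ := max 0 (β 3 - M) with hp3
    have key0 : p0 = m0 + (β 0 - M) := by
      rcases le_total (β 0) M with h|h
      · rw [hp0, hm0, max_eq_left (by linarith), max_eq_right (by linarith)]; ring
      · rw [hp0, hm0, max_eq_right (by linarith), max_eq_left (by linarith)]; ring
    have key1 : p1 = m1 + (β 1 - M) := by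
      rcases le_total (β 1) M with h|h
      · rw [hp1, hm1, max_eq_left (by linarith), max_eq_right (by linarith)]; ring
      · rw [hp1, hm1, max_eq_right (by linarith), max_eq_left (by linarith)]; ring
    have key2 : p2 = m2 + (β 2 - M) := by
      rcases le_total (β 2) M with h|h
      · rw [hp2, hm2, max_eq_left (by linarith), max_eq_right (by linarith)]; ring
      · rw [hp2, hm2, max_eq_right (by linarith), max_eq_left (by linarith)]; ring
    have key3 : p3 = m3 + (β 3 - M) := by
      rcases le_total (β 3) M with h|h
      · rw [hp3, hm3, max_eq_left (by linarith), max_eq_right (by linarith)]; ring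
      · rw [hp3, hm3, max_eq_right (by linarith), max_eq_left (by linarith)]; ring
    have hT : m0 + m1 + m2 + m3 ≤ M := by
      rcases max_cases 0 (M - β 0) with ⟨e0, l0⟩|⟨e0, l0⟩ <;>
      rcases max_cases 0 (M - β 1) with ⟨e1, l1⟩|⟨e1, l1⟩ <;>
      rcases max_cases 0 (M - β 2) with ⟨e2, l2⟩|⟨e2, l2⟩ <;>
      rcases max_cases 0 (M - β 3) with ⟨e3, l3⟩|⟨e3, l3⟩ <;>
      rw [← hm0] at e0 <;> rw [← hm1] at e1 <;> rw [← hm2] at e2 <;> rw [← hm3] at e3 <;>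
      linarith [p01.1, p01.2, p02.1, p02.2, p03.1, p03.2]
    set c : ℝ := (M - (m0 + m1 + m2 + m3)) / 4 with hc
    have hcpos : 0 ≤ c := by rw [hc]; linarith
    have hm0' : 0 ≤ m0 := le_max_left _ _
    have hm1' : 0 ≤ m1 := le_max_left _ _
    have hm2' : 0 ≤ m2 := le_max_left _ _
    have hm3' : 0 ≤ m3 := le_max_left _ _
    have hp0' : 0 ≤ p0 := le_max_left _ _
    have hp1' : 0 ≤ p1 := le_max_left _ _
    have hp2' : 0 ≤ p2 := le_max_left _ _
    have hp3' : 0 ≤ p3 := le_max_left _ _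
    -- weights and points
    set w : Fin 8 → ℝ := ![p0 + c, p1 + c, p2 + c, p3 + c, m0 + c, m1 + c, m2 + c, m3 + c]
      with hw
    set z : Fin 8 → Fin 4 → ℝ :=
      ![![1,0,0,0], ![0,1,0,0], ![0,0,1,0], ![0,0,0,1],
        ![0,1,1,1], ![1,0,1,1], ![1,1,0,1], ![1,1,1,0]] with hz
    have hwnn : ∀ i ∈ (univ : Finset (Fin 8)), 0 ≤ w i := by
      intro i _; fin_cases i
      exacts [add_nonneg hp0' hcpos, add_nonneg hp1' hcpos, add_nonneg hp2' hcpos,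
        add_nonneg hp3' hcpos, add_nonneg hm0' hcpos, add_nonneg hm1' hcpos,
        add_nonneg hm2' hcpos, add_nonneg hm3' hcpos]
    have hwsum : ∑ i : Fin 8, w i = 1 := by
      rw [Fin.sum_univ_eight]
      show p0 + c + (p1 + c) + (p2 + c) + (p3 + c) + (m0 + c) + (m1 + c) + (m2 + c) + (m3 + c) = 1
      rw [hc, hM]; linarith [key0, key1, key2, key3]
    have hzmem : ∀ i ∈ (univ : Finset (Fin 8)), z i ∈
        {v : Fin 4 → ℝ | (∀ i, v i = 0 ∨ v i = 1) ∧
          Odd (Finset.univ.filter (fun i => v i = 1)).card} := by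
      intro i _
      fin_cases i <;>
        refine ⟨fun k => by fin_cases k <;> first | exact Or.inl rfl | exact Or.inr rfl, ?_⟩ <;>
        · rw [Finset.card_filter, Fin.sum_univ_four]
          norm_num [hz, Matrix.cons_val_zero, Matrix.cons_val_one, Matrix.head_cons,
            Matrix.cons_val_two, Matrix.tail_cons, Matrix.cons_val_three]
          try exact ⟨1, by norm_num⟩
    have hmass := Finset.centerMass_mem_convexHull (univ : Finset (Fin 8)) hwnn
      (by rw [hwsum]; norm_num) hzmem
    rw [Finset.centerMass_eq_of_sum_1 _ _ hwsum] at hmass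
    have hβ : ∑ i : Fin 8, w i • z i = β := by
      funext k
      rw [Finset.sum_apply]
      simp only [Pi.smul_apply, smul_eq_mul]
      rw [Fin.sum_univ_eight]
      fin_cases k
      · show (p0+c)*1 + (p1+c)*0 + (p2+c)*0 + (p3+c)*0 + (m0+c)*0 + (m1+c)*1 + (m2+c)*1 + (m3+c)*1 = β 0
        rw [hc]; linarith [key0]
      · show (p0+c)*0 + (p1+c)*1 + (p2+c)*0 + (p3+c)*0 + (m0+c)*1 + (m1+c)*0 + (m2+c)*1 + (m3+c)*1 = β 1
        rw [hc]; linarith [key1]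
      · show (p0+c)*0 + (p1+c)*0 + (p2+c)*1 + (p3+c)*0 + (m0+c)*1 + (m1+c)*1 + (m2+c)*0 + (m3+c)*1 = β 2
        rw [hc]; linarith [key2]
      · show (p0+c)*0 + (p1+c)*0 + (p2+c)*0 + (p3+c)*1 + (m0+c)*1 + (m1+c)*1 + (m2+c)*1 + (m3+c)*0 = β 3
        rw [hc]; linarith [key3]
    rw [hβ] at hmass
    exact hmass
end
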